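/- Let T be a bounded linear operator on C([0,ω₁]) such that T ≠ P̃σ ∘ T ∘ P̃σ for every countable ordinal σ. Then there exists ε > 0 such that for every countable ordinal ξ there is a function f ∈ C([0,ω₁]) with f(α) = 0 for all α ≤ ξ and f(ω₁) = 0, satisfying ‖f‖ ≤ 1 and ‖Tf‖ ≥ ε. -/

import Mathlib

set_option synthInstance.maxHeartbeats 1000000
set_option maxHeartbeats 2000000

noncomputable section
open Set Ordinal

/-- `ω₁`, the first uncountable ordinal. -/
abbrev omega1 : Ordinal.{0} := Ordinal.omega 1

/-- Every ordinal interval `[0, o]` is a compact space in its (inherited) order topology. -/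
instance (o : Ordinal) : CompactSpace (Set.Iic o) := by
  have h : IsCompact (Set.Iic o) := by
    have := isCompact_Icc (a := (⊥ : Ordinal)) (b := o)
    rwa [Set.Icc_bot] at this
  exact isCompact_iff_compactSpace.mp h

/-- The Banach space `C([0, ω₁])` of continuous real-valued functions on `[0, ω₁]`,
with the supremum norm. -/
abbrev CC := C(Set.Iic omega1, ℝ)

/-- The interval `{α ∈ [0, o] : α ≤ σ}` is clopen. -/
theorem isClopen_le (o σ : Ordinal) : IsClopen {α : Set.Iic o | (α : Ordinal) ≤ σ} := by
  constructor
  · exact isClosed_Iic.preimage continuous_subtype_val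
  · have : {α : Set.Iic o | (α : Ordinal) ≤ σ}
        = (Subtype.val) ⁻¹' (Set.Iio (Order.succ σ)) := by
      ext α; simp [Order.lt_succ_iff]
    rw [this]
    exact isOpen_Iio.preimage continuous_subtype_val

/-- The continuous retraction of `[0, ω₁]` fixing `[0, σ]` and sending `(σ, ω₁]` to `ω₁`. -/
def retr (σ : Ordinal) : C(Set.Iic omega1, Set.Iic omega1) :=
  letI : ∀ j : Set.Iic omega1, Decidable (j ∈ {α : Set.Iic omega1 | (α : Ordinal) ≤ σ}) :=
    fun _ => Classical.dec _
  ⟨({α : Set.Iic omega1 | (α : Ordinal) ≤ σ}).piecewise id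
      (fun _ => ⟨omega1, Set.self_mem_Iic⟩),
    Continuous.piecewise
      (fun a ha => by
        rw [(isClopen_le omega1 σ).frontier_eq] at ha
        exact absurd ha (Set.notMem_empty a))
      continuous_id continuous_const⟩

/-- The projection `P̃σ` on `C([0, ω₁])`: `(P̃σ f)(α) = f α` for `α ≤ σ`
and `(P̃σ f)(α) = f ω₁` for `σ < α ≤ ω₁`. -/
def Ptilde (σ : Ordinal) : CC →L[ℝ] CC :=
  LinearMap.mkContinuous
    { toFun := fun f => f.comp (retr σ)
      map_add' := fun f g => by ext x; simp
      map_smul' := fun c f => by ext x; simp }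
    1
    (fun f => by
      rw [one_mul]
      exact (ContinuousMap.norm_le _ (norm_nonneg f)).mpr
        fun x => ContinuousMap.norm_coe_le_norm f _)

/-- The top point of `[0, ω₁]`. -/
def Otop : Set.Iic omega1 := ⟨omega1, Set.self_mem_Iic⟩

lemma htop_eq : (⊤ : Set.Iic omega1) = Otop := rfl

lemma omega1_pos : (0 : Ordinal) < omega1 := Ordinal.omega_pos 1

instance : Nontrivial (Set.Iic omega1) :=
  ⟨⟨⟨0, omega1_pos.le⟩, Otop, fun h => omega1_pos.ne (congrArg Subtype.val h)⟩⟩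

lemma retr_apply (σ : Ordinal) (x : Set.Iic omega1) :
    retr σ x = if (x : Ordinal) ≤ σ then x else Otop := by
  show ({α : Set.Iic omega1 | (α : Ordinal) ≤ σ}).piecewise id (fun _ => Otop) x = _
  by_cases h : (x : Ordinal) ≤ σ
  · rw [if_pos h]; exact Set.piecewise_eq_of_mem _ _ _ h
  · rw [if_neg h]; exact Set.piecewise_eq_of_notMem _ _ _ h

lemma Ptilde_apply (σ : Ordinal) (f : CC) (x : Set.Iic omega1) :
    Ptilde σ f x = f (retr σ x) := rfl

lemma Ptilde_apply_of_le {σ : Ordinal} (f : CC) {x : Set.Iic omega1}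
    (h : (x : Ordinal) ≤ σ) : Ptilde σ f x = f x := by
  rw [Ptilde_apply, retr_apply, if_pos h]

lemma Ptilde_apply_of_not_le {σ : Ordinal} (f : CC) {x : Set.Iic omega1}
    (h : ¬ (x : Ordinal) ≤ σ) : Ptilde σ f x = f Otop := by
  rw [Ptilde_apply, retr_apply, if_neg h]

lemma Ptilde_apply_top {σ : Ordinal} (h : σ < omega1) (f : CC) :
    Ptilde σ f Otop = f Otop :=
  Ptilde_apply_of_not_le f (not_le.2 h)

lemma Ptilde_comp_eq {σ τ : Ordinal} (h : σ ≤ τ) (hτ : τ < omega1) (f : CC) :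
    Ptilde σ (Ptilde τ f) = Ptilde σ f := by
  ext x
  by_cases hx : (x : Ordinal) ≤ σ
  · rw [Ptilde_apply_of_le _ hx, Ptilde_apply_of_le _ hx, Ptilde_apply_of_le _ (hx.trans h)]
  · rw [Ptilde_apply_of_not_le _ hx, Ptilde_apply_of_not_le _ hx, Ptilde_apply_top hτ]

lemma iSup_lt_omega1 (f : ℕ → Ordinal) (hf : ∀ n, f n < omega1) : (⨆ n, f n) < omega1 := by
  have h : ∀ n, f n < (Cardinal.aleph 1).ord := by
    intro n; rw [Cardinal.ord_aleph]; exact hf n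
  have : (⨆ n, f n) < (Cardinal.aleph 1).ord := by
    rw [Cardinal.ord_aleph]; exact Ordinal.iSup_lt_omega_one hf
  rwa [Cardinal.ord_aleph] at this

lemma exists_eventually_const (g : CC) :
    ∃ τ < omega1, ∀ x : Set.Iic omega1, τ < (x : Ordinal) → g x = g Otop := by
  have key : ∀ n : ℕ, ∃ a : Set.Iic omega1, a < ⊤ ∧
      ∀ x : Set.Iic omega1, a < x → dist (g x) (g Otop) < 1 / (n + 1) := by
    intro n
    have hU : {x : Set.Iic omega1 | dist (g x) (g Otop) < 1 / (n + 1)}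
        ∈ nhds (⊤ : Set.Iic omega1) := by
      have hb : Metric.ball (g Otop) (1 / (n + 1)) ∈ nhds (g Otop) :=
        Metric.ball_mem_nhds _ (by positivity)
      have := (g.continuous.tendsto (⊤ : Set.Iic omega1)) (by rw [htop_eq]; exact hb)
      simpa [Metric.mem_ball, Set.preimage] using this
    rcases nhds_top_basis.mem_iff.1 hU with ⟨a, ha, hsub⟩
    exact ⟨a, ha, fun x hx => hsub hx⟩
  choose a ha hconst using key
  refine ⟨⨆ n, ((a n : Set.Iic omega1) : Ordinal), iSup_lt_omega1 _ (fun n => ?_), ?_⟩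
  · have := (ha n).trans_le (le_top (a := (⊤ : Set.Iic omega1)))
    exact lt_of_lt_of_le (Subtype.coe_lt_coe.2 (ha n)) le_rfl
  · intro x hx
    have hd : ∀ n : ℕ, dist (g x) (g Otop) < 1 / (n + 1) := by
      intro n
      refine hconst n x ?_
      have h1 : ((a n : Set.Iic omega1) : Ordinal) ≤ ⨆ m, ((a m : Set.Iic omega1) : Ordinal) :=
        Ordinal.le_iSup (fun m => ((a m : Set.Iic omega1) : Ordinal)) n
      exact Subtype.coe_lt_coe.1 (h1.trans_lt hx)
    have hd0 : dist (g x) (g Otop) ≤ 0 := by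
      by_contra hpos
      push_neg at hpos
      obtain ⟨n, hn⟩ := exists_nat_one_div_lt hpos
      exact absurd (hd n) (not_lt.2 hn.le)
    exact dist_le_zero.1 hd0

lemma secondCountable_of_countable_order {α : Type*} [LinearOrder α] [TopologicalSpace α]
    [OrderTopology α] [Countable α] : SecondCountableTopology α := by
  refine ⟨⟨{s | ∃ a : α, s = Set.Ioi a ∨ s = Set.Iio a}, ?_,
    OrderTopology.topology_eq_generate_intervals⟩⟩
  have hsub : {s | ∃ a : α, s = Set.Ioi a ∨ s = Set.Iio a}
      ⊆ Set.range (fun a : α => Set.Ioi a) ∪ Set.range (fun a : α => Set.Iio a) := by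
    rintro s ⟨a, rfl | rfl⟩
    · exact Or.inl ⟨a, rfl⟩
    · exact Or.inr ⟨a, rfl⟩
  exact ((Set.countable_range _).union (Set.countable_range _)).mono hsub

lemma countable_Iic_of_lt {τ : Ordinal} (h : τ < omega1) : Countable (Set.Iic τ) := by
  rw [← Cardinal.mk_le_aleph0_iff]
  have h1 : Set.Iic τ = Set.Iio (Order.succ τ) := (Order.Iio_succ τ).symm
  rw [h1, Ordinal.mk_Iio_ordinal, Cardinal.lift_le_aleph0]
  have h2 : Order.succ τ < omega1 := (Cardinal.isSuccLimit_omega 1).succ_lt h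
  have h3 : (Order.succ τ).card < Cardinal.aleph 1 := by
    rw [← Cardinal.lt_ord, Cardinal.ord_aleph]; exact h2
  rwa [← Cardinal.succ_aleph0, Order.lt_succ_iff] at h3

lemma exists_seq_dense_range_Ptilde {σ : Ordinal} (hσ : σ < omega1) :
    ∃ u : ℕ → CC, ∀ f : CC, Ptilde σ f ∈ closure (Set.range u) := by
  set κ := Order.succ σ with hκdef
  have hκ : κ < omega1 := (Cardinal.isSuccLimit_omega 1).succ_lt hσ
  have hσκ : σ ≤ κ := Order.le_succ σ
  have hmincont : Continuous fun x : Set.Iic omega1 =>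
      (⟨min (x : Ordinal) κ, Set.mem_Iic.2 (min_le_right _ _)⟩ : Set.Iic κ) :=
    Continuous.subtype_mk (continuous_subtype_val.min continuous_const) _
  set m : C(Set.Iic omega1, Set.Iic κ) := ⟨_, hmincont⟩ with hm
  set j : C(Set.Iic κ, Set.Iic omega1) :=
    ⟨fun x => ⟨(x : Ordinal), x.2.trans hκ.le⟩,
      Continuous.subtype_mk continuous_subtype_val _⟩ with hj
  letI : Countable (Set.Iic κ) := countable_Iic_of_lt hκ
  letI : SecondCountableTopology (Set.Iic κ) := secondCountable_of_countable_order
  have hsep : TopologicalSpace.IsSeparable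
      (Set.range (fun g : C(Set.Iic κ, ℝ) => g.comp m) : Set CC) :=
    TopologicalSpace.isSeparable_range (ContinuousMap.continuous_precomp m)
  obtain ⟨c, hc_count, hc_sub⟩ := hsep
  obtain ⟨u, hu⟩ := (hc_count.insert (0 : CC)).exists_eq_range (Set.insert_nonempty _ _)
  refine ⟨u, fun f => ?_⟩
  have hmem : Ptilde σ f ∈ Set.range (fun g : C(Set.Iic κ, ℝ) => g.comp m) := by
    refine ⟨(Ptilde σ f).comp j, ?_⟩
    ext x
    show (Ptilde σ f) (j (m x)) = Ptilde σ f x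
    by_cases hx : (x : Ordinal) ≤ σ
    · have hjm : j (m x) = x := Subtype.ext (min_eq_left (hx.trans hσκ))
      rw [hjm]
    · have hκx : κ ≤ (x : Ordinal) := Order.succ_le_of_lt (not_le.1 hx)
      have hval : ((j (m x) : Set.Iic omega1) : Ordinal) = κ := min_eq_right hκx
      have h2 : ¬ ((j (m x) : Set.Iic omega1) : Ordinal) ≤ σ := by
        rw [hval]; exact not_le.2 (Order.lt_succ σ)
      rw [Ptilde_apply_of_not_le _ h2, Ptilde_apply_of_not_le _ hx]
  have hmem2 : Ptilde σ f ∈ closure c := hc_sub hmem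
  exact closure_mono (by rw [← hu]; exact Set.subset_insert _ _) hmem2

lemma norm_smul_CC (c : ℝ) (f : CC) : ‖c • f‖ = ‖c‖ * ‖f‖ := norm_smul c f


/-- If `T ≠ P̃σ ∘ T ∘ P̃σ` for every countable ordinal `σ`, then there is `ε > 0` such that for
every countable ordinal `ξ` there is `f ∈ C([0,ω₁])` vanishing on `[0,ξ]` and at `ω₁` with
`‖f‖ ≤ 1` and `‖T f‖ ≥ ε`. -/
theorem exists_eps_of_ne_Ptilde_conj (T : CC →L[ℝ] CC)
    (hT : ∀ σ < omega1, T ≠ (Ptilde σ).comp (T.comp (Ptilde σ))) :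
    ∃ ε > (0 : ℝ), ∀ ξ < omega1, ∃ f : CC,
      (∀ α : Set.Iic omega1, (α : Ordinal) ≤ ξ → f α = 0) ∧
      f ⟨omega1, Set.self_mem_Iic⟩ = 0 ∧
      ‖f‖ ≤ 1 ∧ ε ≤ ‖T f‖ := by
  by_contra hcon
  push_neg at hcon
  have hcn : ∀ n : ℕ, ∃ ξ, ξ < omega1 ∧ ∀ f : CC,
      (∀ α : Set.Iic omega1, (α : Ordinal) ≤ ξ → f α = 0) →
      f ⟨omega1, Set.self_mem_Iic⟩ = 0 → ‖f‖ ≤ 1 → ‖T f‖ < 1 / (n + 1) := by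
    intro n
    obtain ⟨ξ, hξ, hforall⟩ := hcon (1 / (n + 1)) (by positivity)
    exact ⟨ξ, hξ, hforall⟩
  choose ξ hξ hsmall using hcn
  set σ₀ := ⨆ n, ξ n with hσ₀def
  have hσ₀ : σ₀ < omega1 := iSup_lt_omega1 _ hξ
  -- Step 1: T kills functions vanishing on [0, σ₀] and at ω₁.
  have step1 : ∀ f : CC, (∀ α : Set.Iic omega1, (α : Ordinal) ≤ σ₀ → f α = 0) →
      f ⟨omega1, Set.self_mem_Iic⟩ = 0 → T f = 0 := by
    intro f h1 h2
    have hpos : (0 : ℝ) < ‖f‖ + 1 := by positivity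
    have hnorm : ∀ n : ℕ, ‖T f‖ < (‖f‖ + 1) * (1 / (n + 1)) := by
      intro n
      set g : CC := (‖f‖ + 1)⁻¹ • f with hg
      have hg1 : ∀ α : Set.Iic omega1, (α : Ordinal) ≤ ξ n → g α = 0 := by
        intro α hα
        have hfα : f α = 0 := h1 α (hα.trans (Ordinal.le_iSup ξ n))
        simp [hg, hfα]
      have hg2 : g ⟨omega1, Set.self_mem_Iic⟩ = 0 := by simp [hg, h2]
      have e2 : ‖((‖f‖ + 1 : ℝ))⁻¹‖ = (‖f‖ + 1)⁻¹ := by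
        rw [Real.norm_eq_abs, abs_of_nonneg (by positivity)]
      have hgnorm : ‖g‖ ≤ 1 := by
        have e1 : ‖g‖ = ‖((‖f‖ + 1 : ℝ))⁻¹‖ * ‖f‖ := by rw [hg]; exact norm_smul_CC _ f
        rw [e1, e2]
        have h1' : (‖f‖ + 1)⁻¹ * ‖f‖ ≤ (‖f‖ + 1)⁻¹ * (‖f‖ + 1) :=
          mul_le_mul_of_nonneg_left (by linarith) (inv_nonneg.2 hpos.le)
        rwa [inv_mul_cancel₀ hpos.ne'] at h1'
      have hlt := hsmall n g hg1 hg2 hgnorm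
      have hTg : ‖T g‖ = (‖f‖ + 1)⁻¹ * ‖T f‖ := by
        rw [hg, map_smul]
        rw [norm_smul_CC, e2]
      rw [hTg] at hlt
      calc ‖T f‖ = (‖f‖ + 1) * ((‖f‖ + 1)⁻¹ * ‖T f‖) := by field_simp
        _ < (‖f‖ + 1) * (1 / (n + 1)) := mul_lt_mul_of_pos_left hlt hpos
    have hle : ‖T f‖ ≤ 0 := by
      have hlim : Filter.Tendsto (fun n : ℕ => (‖f‖ + 1) * (1 / (n + 1)))
          Filter.atTop (nhds 0) := by
        have h0 := tendsto_one_div_add_atTop_nhds_zero_nat (𝕜 := ℝ)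
        have := h0.const_mul (‖f‖ + 1)
        simpa using this
      exact ge_of_tendsto' hlim fun n => (hnorm n).le
    exact norm_le_zero_iff.1 hle
  -- Step 2: T = T ∘ P̃τ for σ₀ ≤ τ < ω₁.
  have step2 : ∀ τ, σ₀ ≤ τ → τ < omega1 → ∀ f : CC, T f = T (Ptilde τ f) := by
    intro τ hστ hτ f
    have hzero : T (f - Ptilde τ f) = 0 := by
      refine step1 _ (fun α hα => ?_) ?_
      · have hcoe : (f - Ptilde τ f) α = f α - Ptilde τ f α := rfl
        rw [hcoe, Ptilde_apply_of_le _ (hα.trans hστ), _root_.sub_self]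
      · have hcoe : (f - Ptilde τ f) ⟨omega1, Set.self_mem_Iic⟩
            = f Otop - Ptilde τ f Otop := rfl
        rw [hcoe, Ptilde_apply_top hτ, _root_.sub_self]
    rw [map_sub] at hzero
    exact sub_eq_zero.1 hzero
  -- Step 3: dense sequence in the range of P̃σ₀ and eventual constancy.
  obtain ⟨u, hu⟩ := exists_seq_dense_range_Ptilde hσ₀
  have hev : ∀ n : ℕ, ∃ τ < omega1, ∀ ρ, τ ≤ ρ → ρ < omega1 →
      Ptilde ρ (T (u n)) = T (u n) := by
    intro n
    obtain ⟨τ, hτ, hconst⟩ := exists_eventually_const (T (u n))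
    refine ⟨τ, hτ, fun ρ hρ1 _ => ?_⟩
    ext x
    by_cases hx : (x : Ordinal) ≤ ρ
    · rw [Ptilde_apply_of_le _ hx]
    · rw [Ptilde_apply_of_not_le _ hx]
      exact (hconst x (hρ1.trans_lt (not_le.1 hx))).symm
  choose θ hθ hθconst using hev
  set τ := max σ₀ (⨆ n, θ n) with hτdef
  have hτω : τ < omega1 := max_lt hσ₀ (iSup_lt_omega1 _ hθ)
  have hστ : σ₀ ≤ τ := le_max_left _ _
  have hA : ∀ h : CC, h ∈ closure (Set.range u) → Ptilde τ (T h) = T h := by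
    intro h hh
    have hclosed : IsClosed {g : CC | ((Ptilde τ).comp T) g = T g} :=
      isClosed_eq ((Ptilde τ).comp T).continuous T.continuous
    have hsub : Set.range u ⊆ {g : CC | ((Ptilde τ).comp T) g = T g} := by
      rintro _ ⟨n, rfl⟩
      show Ptilde τ (T (u n)) = T (u n)
      exact hθconst n τ (le_max_of_le_right (Ordinal.le_iSup θ n)) hτω
    exact closure_minimal hsub hclosed hh
  refine hT τ hτω ?_
  refine ContinuousLinearMap.ext fun f => ?_
  have h1 : T f = T (Ptilde τ f) := step2 τ hστ hτω f
  have h2 : T (Ptilde τ f) = T (Ptilde σ₀ f) := by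
    rw [step2 σ₀ le_rfl hσ₀ (Ptilde τ f), Ptilde_comp_eq hστ hτω]
  have h3 : Ptilde τ (T (Ptilde σ₀ f)) = T (Ptilde σ₀ f) := hA _ (hu f)
  show T f = Ptilde τ (T (Ptilde τ f))
  rw [h2, h3, h1, h2]
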